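/- Let K be a finite group of order l, n ≥ 2, and G = F_n ≀ K the wreath product, with Δ : G → ℤ defined by Δ((f_{k₁},…,f_{k_l})k) = Σ_{i=1}^l ql(f_{k_i}). Then for every g ∈ G: |Δ(g) + Δ(g⁻¹)| ≤ 3l. -/

import Mathlib

/-- `tr m` is `-1, 0, 1` according as `m ≡ -1, 0, 1 (mod 3)`. -/
def tr (m : ℤ) : ℤ := if m % 3 = 0 then 0 else if m % 3 = 1 then 1 else -1

/-- `ql w` is the sum of `tr` of the exponents of the syllables in the
reduced syllable form of `w`: the reduced word `w.toWord` is split into maximal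
runs (syllables) of letters with the same generator, and each syllable
`x_i ^ α` contributes `tr α`. -/
def ql {n : ℕ} (w : FreeGroup (Fin n)) : ℤ :=
  ((w.toWord.splitBy (fun p q => p.1 == q.1)).map
    (fun s => tr ((s.map (fun p => if p.2 then (1 : ℤ) else -1)).sum))).sum

/-- The permutation action of `K` on the base group `K → H` of the wreath product
`H ≀ K`, by left translation on the index set: `(k • f) k' = f (k⁻¹ * k')`. -/
def wreathAction (H K : Type*) [Group H] [Group K] : K →* MulAut (K → H) where
  toFun k :=
    { toFun := fun f x => f (k⁻¹ * x)
      invFun := fun f x => f (k * x)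
      left_inv := fun f => by funext x; simp [← mul_assoc]
      right_inv := fun f => by funext x; simp [← mul_assoc]
      map_mul' := fun f g => rfl }
  map_one' := by
    ext f x
    simp
  map_mul' := fun a b => by
    ext f x
    simp [mul_assoc]

/-- The wreath product `H ≀ K = (∏_{k ∈ K} H) ⋊ K`. -/
abbrev WreathProduct (H K : Type*) [Group H] [Group K] :=
  SemidirectProduct (K → H) K (wreathAction H K)

/-- The quasi-homomorphism `Δ : Fₙ ≀ K → ℤ`, `Δ((f_{k₁}, …, f_{k_l})k) = Σᵢ ql(f_{kᵢ})`. -/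
def Δ {n : ℕ} {K : Type*} [Group K] [Fintype K]
    (g : WreathProduct (FreeGroup (Fin n)) K) : ℤ :=
  ∑ k : K, ql (g.left k)

namespace MySplit
open List

variable {α : Type*} (r : α → α → Bool)

theorem loop_append (l : List α) (a : α) (g : List α) (gs : List (List α)) :
    splitBy.loop r l a g gs = gs.reverse ++ splitBy.loop r l a g [] := by
  induction l generalizing a g gs with
  | nil => simp [splitBy.loop]
  | cons b l ih =>
    simp only [splitBy.loop]
    cases hr : r a b <;> dsimp only
    · rw [ih b [] ((a::g).reverse :: gs), ih b [] [(a::g).reverse]]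
      simp
    · rw [ih b (a::g) gs]

theorem loop_g (l : List α) (a : α) (g : List α) :
    splitBy.loop r l a g [] = (splitBy.loop r l a [] []).modifyHead (g.reverse ++ ·) := by
  induction l generalizing a g with
  | nil => simp [splitBy.loop]
  | cons b l ih =>
    simp only [splitBy.loop]
    cases hr : r a b <;> dsimp only
    · rw [loop_append r l b [] [(a::g).reverse], loop_append r l b [] [[a].reverse]]
      simp
    · rw [ih b (a::g), ih b [a]]
      cases splitBy.loop r l b [] [] <;> simp

theorem splitBy_singleton (a : α) : splitBy r [a] = [[a]] := by
  simp [splitBy, splitBy.loop]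

theorem splitBy_cons_cons (a b : α) (l : List α) :
    splitBy r (a :: b :: l) =
      if r a b then (splitBy r (b :: l)).modifyHead (a :: ·)
      else [a] :: splitBy r (b :: l) := by
  show splitBy.loop r (b :: l) a [] [] = _
  simp only [splitBy.loop, splitBy]
  cases hr : r a b <;> dsimp only
  · rw [loop_append r l b [] [[a].reverse]]
    simp
  · rw [loop_g r l b [a]]
    simp

end MySplit

namespace MySplit
open List

variable {α β : Type*} (r : α → α → Bool)

theorem splitBy_map {s : β → β → Bool} (f : α → β)
    (hf : ∀ a b, s (f a) (f b) = r a b) (l : List α) :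
    splitBy s (l.map f) = (splitBy r l).map (List.map f) := by
  induction l with
  | nil => simp
  | cons a l ih =>
    cases l with
    | nil => simp [splitBy_singleton]
    | cons b t =>
      rw [List.map_cons, List.map_cons, splitBy_cons_cons, splitBy_cons_cons, hf,
        ← List.map_cons (f := f) (a := b) (l := t), ih]
      cases hr : r a b <;> simp
      cases splitBy r (b :: t) <;> simp

/-- apply `f` to the last element of a list -/
def apLast (f : List α → List α) : List (List α) → List (List α)
  | [] => []
  | [g] => [f g]
  | g :: gs => g :: apLast f gs

theorem apLast_append (f : List α → List α) (L : List (List α)) (g : List α) :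
    apLast f (L ++ [g]) = L ++ [f g] := by
  induction L with
  | nil => rfl
  | cons h t ih =>
    cases t with
    | nil => simp [apLast]
    | cons h' t' =>
      show h :: apLast f ((h' :: t') ++ [g]) = h :: ((h' :: t') ++ [f g])
      rw [ih]

theorem modifyHead_cons_apLast (a : α) (x : α) (L : List (List α)) :
    (apLast (· ++ [x]) L).modifyHead (a :: ·) = apLast (· ++ [x]) (L.modifyHead (a :: ·)) := by
  match L with
  | [] => rfl
  | [g] => simp [apLast]
  | g :: h :: t => rfl

theorem splitBy_ne_nil (a : α) (l : List α) : splitBy r (a :: l) ≠ [] := by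
  intro h
  have := List.flatten_splitBy r (a :: l)
  rw [h] at this
  simp at this

theorem splitBy_concat (l : List α) (a : α) (hl : l ≠ []) :
    splitBy r (l ++ [a]) =
      if r (l.getLast hl) a then apLast (· ++ [a]) (splitBy r l)
      else splitBy r l ++ [[a]] := by
  induction l with
  | nil => simp at hl
  | cons b t ih =>
    cases t with
    | nil =>
      simp only [List.getLast_singleton, List.singleton_append, splitBy_cons_cons,
        splitBy_singleton]
      cases hr : r b a <;> simp [apLast]
    | cons c t' =>
      have ht : c :: t' ≠ [] := by simp
      rw [show (b :: c :: t') ++ [a] = b :: c :: (t' ++ [a]) from rfl,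
        splitBy_cons_cons r b c (t' ++ [a]),
        show c :: (t' ++ [a]) = (c :: t') ++ [a] from rfl, ih ht, splitBy_cons_cons]
      have hgl : (b :: c :: t').getLast hl = (c :: t').getLast ht := by
        simp [List.getLast_cons]
      rw [hgl]
      obtain ⟨G, GS, hG⟩ : ∃ G GS, splitBy r (c :: t') = G :: GS :=
        List.exists_cons_of_ne_nil (splitBy_ne_nil r c t')
      cases hr : r b c <;> cases hr2 : r ((c :: t').getLast ht) a <;>
        simp [hG, modifyHead_cons_apLast, apLast]

theorem rev_modifyHead (a : α) (L : List (List α)) :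
    ((L.modifyHead (a :: ·)).map List.reverse).reverse
      = apLast (· ++ [a]) ((L.map List.reverse).reverse) := by
  cases L with
  | nil => rfl
  | cons g gs =>
    simp only [List.modifyHead_cons, List.map_cons, List.reverse_cons, apLast_append,
      List.reverse_cons]

theorem splitBy_reverse (hr : ∀ a b, r a b = r b a) (l : List α) :
    splitBy r l.reverse = ((splitBy r l).map List.reverse).reverse := by
  induction l with
  | nil => simp
  | cons a t ih =>
    cases t with
    | nil => simp [splitBy_singleton]
    | cons b t' =>
      have ht : (b :: t').reverse ≠ [] := by simp
      rw [List.reverse_cons, splitBy_concat r _ a ht, splitBy_cons_cons, ih]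
      have hgl : (b :: t').reverse.getLast ht = b := by
        simp [List.getLast_reverse]
      rw [hgl, hr b a]
      cases hra : r a b <;> simp only [if_false, if_true, Bool.false_eq_true]
      · simp
      · rw [rev_modifyHead]

end MySplit

theorem tr_neg (m : ℤ) : tr (-m) = -tr m := by
  unfold tr
  omega

theorem sum_map_neg' {α : Type*} (g : α → ℤ) (s : List α) :
    (s.map (fun p => -g p)).sum = -(s.map g).sum := by
  induction s with
  | nil => simp
  | cons a t ih => simp [ih]; ring

theorem ql_inv {n : ℕ} (w : FreeGroup (Fin n)) : ql w⁻¹ = -ql w := by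
  unfold ql
  rw [FreeGroup.toWord_inv]
  unfold FreeGroup.invRev
  set L := w.toWord with hL
  set r : (Fin n × Bool) → (Fin n × Bool) → Bool := fun p q => p.1 == q.1 with hr
  set f : (Fin n × Bool) → (Fin n × Bool) := fun p => (p.1, !p.2) with hf
  rw [MySplit.splitBy_reverse r (by intro a b; simp [hr, Fin.ext_iff, eq_comm]) (L.map f),
    MySplit.splitBy_map r f (by intro a b; simp [hr, hf]) L]
  have hfun : ((fun p : Fin n × Bool => if p.2 then (1:ℤ) else -1) ∘ f)
      = fun p : Fin n × Bool => -(if p.2 then (1:ℤ) else -1) := by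
    funext p
    obtain ⟨i, b⟩ := p
    cases b <;> simp [hf]
  have step : (fun s : List (Fin n × Bool) =>
        tr ((List.map (fun p : Fin n × Bool => if p.2 then (1:ℤ) else -1)
          (List.reverse (List.map f s))).sum))
      = fun s => -tr ((List.map (fun p : Fin n × Bool => if p.2 then (1:ℤ) else -1) s).sum) := by
    funext s
    rw [List.map_reverse, List.sum_reverse, List.map_map, hfun, sum_map_neg', tr_neg]
  rw [List.map_reverse, List.sum_reverse, List.map_map, List.map_map]
  simp only [Function.comp_def]
  rw [step, sum_map_neg']

/-- For every `g ∈ Fₙ ≀ K`: `|Δ(g) + Δ(g⁻¹)| ≤ 3l`, where `l = |K|`. -/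
theorem delta_inv (n : ℕ) (hn : 2 ≤ n) (K : Type*) [Group K] [Fintype K]
    (g : WreathProduct (FreeGroup (Fin n)) K) :
    |Δ g + Δ g⁻¹| ≤ 3 * (Fintype.card K : ℤ) := by
  have hleft : ∀ k : K, g⁻¹.left k = (g.left (g.right * k))⁻¹ := by
    intro k
    rw [SemidirectProduct.inv_left]
    show (g.left⁻¹) ((g.right⁻¹)⁻¹ * k) = (g.left (g.right * k))⁻¹
    simp
  have h : Δ g⁻¹ = -Δ g := by
    unfold Δ
    calc ∑ k : K, ql (g⁻¹.left k) = ∑ k : K, -ql (g.left (g.right * k)) := by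
          simp only [hleft, ql_inv]
      _ = -∑ k : K, ql (g.left (g.right * k)) := by rw [Finset.sum_neg_distrib]
      _ = -∑ k : K, ql (g.left k) := by
          rw [Fintype.sum_equiv (Equiv.mulLeft g.right)
            (fun k => ql (g.left (g.right * k))) (fun k => ql (g.left k)) (fun k => rfl)]
  rw [h]
  simp
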